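/- Let χ be a real Dirichlet character modulo N, and for each positive integer n set c_n = ∑_{d ∣ n} χ(d). Then the series ∑_{n=1}^∞ c_n · n^{-1/2} diverges (the nonnegative terms c_n · n^{-1/2} are not summable). -/

import Mathlib

open Finset Complex DirichletCharacter ArithmeticFunction

section aux

variable {N : ℕ} [NeZero N] (χ : DirichletCharacter ℂ N)

/-- The values of a real Dirichlet character are `0`, `1` or `-1`. -/
lemma aux_val (hreal : ∀ x : ZMod N, (χ x).im = 0) (x : ZMod N) :
    χ x = 0 ∨ χ x = 1 ∨ χ x = -1 := by
  have hx : χ x = ((χ x).re : ℂ) := Complex.ext rfl (by simp [hreal x])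
  by_cases h : IsUnit x
  · have h1 : ‖χ x‖ = 1 := by
      have := χ.unit_norm_eq_one h.unit
      rwa [h.unit_spec] at this
    rw [hx, Complex.norm_real, Real.norm_eq_abs] at h1
    rcases abs_eq (le_of_lt one_pos) |>.mp h1 with h2 | h2
    · right; left; rw [hx, h2]; norm_num
    · right; right; rw [hx, h2]; norm_num
  · left; exact χ.map_nonunit h

lemma aux_sum_divisors {n : ℕ} (hn : n ≠ 0) :
    ∑ d ∈ n.divisors, χ (d : ZMod N) = χ.zetaMul n := by
  rw [zetaMul, coe_zeta_mul_apply]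
  refine Finset.sum_congr rfl fun d hd => ?_
  exact χ.apply_eq_toArithmeticFunction_apply (Nat.pos_of_mem_divisors hd).ne'

lemma aux_prime_pow (hreal : ∀ x : ZMod N, (χ x).im = 0) {p : ℕ} (hp : p.Prime) (k : ℕ) :
    1 ≤ ‖χ.zetaMul (p ^ (2 * k))‖ := by
  have h : χ.zetaMul (p ^ (2 * k)) = ∑ i ∈ range (2 * k + 1), χ (p : ZMod N) ^ i := by
    rw [← aux_sum_divisors χ (pow_ne_zero _ hp.ne_zero),
      Nat.sum_divisors_prime_pow hp]
    exact Finset.sum_congr rfl fun i _ => by push_cast; rw [map_pow]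
  rcases aux_val χ hreal (p : ZMod N) with h0 | h1 | hm1
  · rw [h, h0, zero_geom_sum]; simp
  · rw [h, h1]
    simp only [one_pow, Finset.sum_const, card_range, nsmul_eq_mul, mul_one]
    rw [norm_natCast]
    exact_mod_cast Nat.one_le_iff_ne_zero.mpr (by omega)
  · rw [h, hm1, neg_one_geom_sum]
    simp [Nat.even_add_one, parity_simps]

lemma aux_sq (hreal : ∀ x : ZMod N, (χ x).im = 0) (m : ℕ) (hm : m ≠ 0) :
    1 ≤ ‖χ.zetaMul (m ^ 2)‖ := by
  have hm2 : m ^ 2 ≠ 0 := pow_ne_zero _ hm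
  rw [χ.isMultiplicative_zetaMul.multiplicative_factorization _ hm2]
  rw [Finsupp.prod]
  rw [norm_prod]
  have h1 : (1:ℝ) = ∏ _p ∈ (m ^ 2).factorization.support, (1:ℝ) := by simp
  rw [h1]
  refine Finset.prod_le_prod (fun _ _ => zero_le_one) fun p hp => ?_
  have hpp : p.Prime := Nat.prime_of_mem_primeFactors (by
    rwa [Nat.support_factorization] at hp)
  have : (m ^ 2).factorization p = 2 * m.factorization p := by
    rw [Nat.factorization_pow]; simp
  rw [this]
  exact aux_prime_pow χ hreal hpp _

end aux

/-- For a real Dirichlet character `χ` mod `N` with coefficients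
`c n = ∑_{d ∣ n} χ(d)`, the series `∑_{n=1}^∞ c n · n^{-1/2}` diverges
(its terms are not summable). -/
theorem not_summable_coeff_rpow_neg_half {N : ℕ} [NeZero N]
    (χ : DirichletCharacter ℂ N) (hreal : ∀ x : ZMod N, (χ x).im = 0)
    (c : ℕ → ℂ) (hc : ∀ n, c n = ∑ d ∈ n.divisors, χ (d : ZMod N)) :
    ¬ Summable (fun n : ℕ => c (n + 1) * ((n : ℂ) + 1) ^ (-(1 / 2 : ℂ))) := by
  intro h
  have hnorm : Summable (fun n : ℕ => ‖c (n + 1) * ((n : ℂ) + 1) ^ (-(1 / 2 : ℂ))‖) :=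
    summable_norm_iff.mpr h
  -- restrict to indices of the form (k+1)^2 - 1
  have hinj : Function.Injective (fun k : ℕ => (k + 1) ^ 2 - 1) := by
    intro a b hab
    simp only at hab
    have ha : 1 ≤ (a+1)^2 := Nat.one_le_iff_ne_zero.mpr (by positivity)
    have hb : 1 ≤ (b+1)^2 := Nat.one_le_iff_ne_zero.mpr (by positivity)
    have h2 : (a+1)^2 = (b+1)^2 := by omega
    have := Nat.pow_left_injective (two_ne_zero) h2
    omega
  have hsub := hnorm.comp_injective hinj
  have hle : ∀ k : ℕ, 1 / ((k : ℝ) + 1) ≤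
      ‖c (((k + 1) ^ 2 - 1) + 1) * ((((k + 1) ^ 2 - 1 : ℕ) : ℂ) + 1) ^ (-(1 / 2 : ℂ))‖ := by
    intro k
    have hk1 : ((k + 1) ^ 2 - 1) + 1 = (k + 1) ^ 2 := by
      have : 1 ≤ (k + 1) ^ 2 := Nat.one_le_iff_ne_zero.mpr (by positivity)
      omega
    have hcast : ((((k + 1) ^ 2 - 1 : ℕ) : ℂ) + 1) = ((((k + 1) ^ 2 : ℕ) : ℝ) : ℂ) := by
      rw [← hk1]; push_cast; ring
    rw [hk1, hcast, norm_mul]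
    have hc1 : 1 ≤ ‖c ((k + 1) ^ 2)‖ := by
      rw [hc, aux_sum_divisors χ (by positivity)]
      exact aux_sq χ hreal (k + 1) (by omega)
    have hpow : ‖((((k + 1) ^ 2 : ℕ) : ℝ) : ℂ) ^ (-(1 / 2 : ℂ))‖ = 1 / ((k : ℝ) + 1) := by
      rw [
        Complex.norm_cpow_eq_rpow_re_of_pos (by positivity)]
      have : (-(1 / 2 : ℂ)).re = (-(1 / 2) : ℝ) := by simp
      rw [this]
      have h2 : (((k + 1) ^ 2 : ℕ) : ℝ) = ((k : ℝ) + 1) ^ (2 : ℕ) := by push_cast; ring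
      rw [h2, ← Real.rpow_natCast ((k : ℝ) + 1) 2, ← Real.rpow_mul (by positivity)]
      rw [show ((2:ℕ):ℝ) * (-(1/2)) = -1 by push_cast; ring, Real.rpow_neg_one,
        inv_eq_one_div]
    rw [hpow]
    calc 1 / ((k : ℝ) + 1) = 1 * (1 / ((k : ℝ) + 1)) := by ring
      _ ≤ ‖c ((k + 1) ^ 2)‖ * (1 / ((k : ℝ) + 1)) := by
          apply mul_le_mul_of_nonneg_right hc1 (by positivity)
  have hsum1 : Summable (fun k : ℕ => 1 / ((k : ℝ) + 1)) :=
    Summable.of_nonneg_of_le (fun k => by positivity) hle hsub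
  have hs2 : Summable (fun n : ℕ => 1 / (n : ℝ)) := by
    rw [← summable_nat_add_iff 1]
    convert hsum1 using 2 with k
    · rfl
    push_cast
    ring
  exact Real.not_summable_one_div_natCast hs2
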